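/- Suppose d(a_{τ_2}) + d(a_{T-τ_2}) = 0 for all 1 ≤ τ_2 ≤ T-1. Then the sequence s' = I(1_K, a_1, ..., a_{T-1}) has ideal autocorrelation (R_{s'}(τ) = -1 for all τ ≢ 0 mod KT) if and only if s = I(0_K, a_1, ..., a_{T-1}) has ideal autocorrelation. -/

import Mathlib

/-- Periodic (cross-)correlation of binary sequences of period `N`. -/
def corr (N : ℕ) (a b : ℕ → ZMod 2) (τ : ℕ) : ℤ :=
  ∑ t ∈ Finset.range N, (-1 : ℤ) ^ ((a t + b (t + τ)).val)

/-- Balance difference `d(a) = 2|support(a)| - K` of a sequence of period `K`. -/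
def bal (K : ℕ) (a : ℕ → ZMod 2) : ℤ :=
  2 * ((((Finset.range K).filter (fun k => a k = 1)).card : ℤ)) - (K : ℤ)

lemma sum_range_mul' {K T : ℕ} (F : ℕ → ℤ) :
    ∑ t ∈ Finset.range (K * T), F t
      = ∑ k ∈ Finset.range K, ∑ i ∈ Finset.range T, F (k * T + i) := by
  induction K with
  | zero => simp
  | succ K ih =>
      rw [Nat.succ_mul, Finset.sum_range_add, ih, Finset.sum_range_succ]

lemma neg_one_pow_one_add (x : ZMod 2) :
    (-1 : ℤ) ^ ((1 + x).val) = -(-1) ^ (x.val) := by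
  revert x; decide

lemma sum_neg_one_pow (K : ℕ) (a : ℕ → ZMod 2) :
    ∑ k ∈ Finset.range K, (-1 : ℤ) ^ ((a k).val) = -(bal K a) := by
  classical
  have hx1 : ∀ x : ZMod 2, x = 1 → (-1:ℤ)^(x.val) = -1 := by decide
  have hx0 : ∀ x : ZMod 2, ¬ x = 1 → (-1:ℤ)^(x.val) = 1 := by decide
  rw [← Finset.sum_filter_add_sum_filter_not (Finset.range K) (fun k => a k = 1)]
  rw [Finset.sum_congr rfl (fun k hk => hx1 (a k) (Finset.mem_filter.mp hk).2),
      Finset.sum_congr rfl (fun k hk => hx0 (a k) (Finset.mem_filter.mp hk).2)]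
  rw [Finset.sum_const, Finset.sum_const]
  have hcards := Finset.card_filter_add_card_filter_not
    (s := Finset.range K) (p := fun k => a k = 1)
  rw [Finset.card_range] at hcards
  rw [bal]
  simp only [nsmul_eq_mul, mul_one, mul_neg_one]
  omega

lemma sum_one_step {K : ℕ} (F : ℕ → ℤ) (hF : ∀ n, F (n + K) = F n) :
    ∑ k ∈ Finset.range K, F (k + 1) = ∑ k ∈ Finset.range K, F k := by
  have h1 := Finset.sum_range_succ' F K
  have h2 := Finset.sum_range_succ F K
  have h3 : F K = F 0 := by simpa using hF 0
  linarith

lemma sum_shift {K : ℕ} (F : ℕ → ℤ) (hF : ∀ n, F (n + K) = F n) :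
    ∀ c, ∑ k ∈ Finset.range K, F (k + c) = ∑ k ∈ Finset.range K, F k := by
  intro c
  induction c with
  | zero => simp
  | succ c ih =>
    have hstep := sum_one_step (K := K) (fun n => F (n + c))
      (fun n => by show F (n + K + c) = F (n + c); rw [show n + K + c = (n + c) + K by ring, hF])
    calc ∑ k ∈ Finset.range K, F (k + (c+1))
        = ∑ k ∈ Finset.range K, F (k + 1 + c) := by
          apply Finset.sum_congr rfl; intro k _; ring_nf
      _ = ∑ k ∈ Finset.range K, F (k + c) := hstep
      _ = _ := ih

/-- If `d(a_{τ2}) + d(a_{T-τ2}) = 0` for all `1 ≤ τ2 ≤ T-1`, then `s'` has ideal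
autocorrelation iff `s` does. -/
theorem stmt9 (K T : ℕ) (hK : 0 < K) (hT : 0 < T)
    (a : ℕ → ℕ → ZMod 2) (s s' : ℕ → ZMod 2)
    (ha : ∀ i, Function.Periodic (a i) K)
    (hs : Function.Periodic s (K * T)) (hs' : Function.Periodic s' (K * T))
    (hs0 : ∀ k, s (k * T) = 0) (hs'0 : ∀ k, s' (k * T) = 1)
    (hcol : ∀ k i, 1 ≤ i → i < T → s (k * T + i) = a i k)
    (hcol' : ∀ k i, 1 ≤ i → i < T → s' (k * T + i) = a i k)
    (hbal : ∀ τ2 : ℕ, 1 ≤ τ2 → τ2 < T → bal K (a τ2) + bal K (a (T - τ2)) = 0) :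
    (∀ τ : ℕ, 1 ≤ τ → τ < K * T → corr (K * T) s' s' τ = -1) ↔
    (∀ τ : ℕ, 1 ≤ τ → τ < K * T → corr (K * T) s s τ = -1) := by
  classical
  have key : ∀ τ : ℕ, corr (K * T) s' s' τ = corr (K * T) s s τ := by
    intro τ
    set τ1 := τ / T with hτ1
    set τ2 := τ % T with hτ2d
    have hτ2T : τ2 < T := Nat.mod_lt _ hT
    have hτeq : τ1 * T + τ2 = τ := by
      rw [hτ1, hτ2d, mul_comm]; exact Nat.div_add_mod τ T
    simp only [corr]
    rw [sum_range_mul', sum_range_mul']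
    by_cases hz : τ2 = 0
    · apply Finset.sum_congr rfl; intro k _
      apply Finset.sum_congr rfl; intro i hi
      rw [Finset.mem_range] at hi
      have harg : k * T + i + τ = (k + τ1) * T + i := by
        rw [← hτeq, hz]; ring
      rcases Nat.eq_zero_or_pos i with h0 | h1
      · subst h0
        simp only [Nat.add_zero] at harg ⊢
        rw [harg, hs0 k, hs0 (k + τ1), hs'0 k, hs'0 (k + τ1)]
        decide
      · rw [harg, hcol' k i h1 hi, hcol' (k + τ1) i h1 hi,
            hcol k i h1 hi, hcol (k + τ1) i h1 hi]
    · have hτ2pos : 1 ≤ τ2 := Nat.one_le_iff_ne_zero.mpr hz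
      rw [← sub_eq_zero]
      simp only [← Finset.sum_sub_distrib]
      rw [Finset.sum_comm]
      have hsub : ({0, T - τ2} : Finset ℕ) ⊆ Finset.range T := by
        intro x hx
        simp only [Finset.mem_insert, Finset.mem_singleton] at hx
        rw [Finset.mem_range]
        rcases hx with h | h <;> omega
      have hzero : ∀ i ∈ Finset.range T, i ∉ ({0, T - τ2} : Finset ℕ) →
          (∑ k ∈ Finset.range K,
            ((-1:ℤ) ^ ((s' (k * T + i) + s' (k * T + i + τ)).val)
              - (-1:ℤ) ^ ((s (k * T + i) + s (k * T + i + τ)).val))) = 0 := by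
        intro i hi hni
        rw [Finset.mem_range] at hi
        simp only [Finset.mem_insert, Finset.mem_singleton, not_or] at hni
        obtain ⟨hi0, hiT⟩ := hni
        have hi1 : 1 ≤ i := Nat.one_le_iff_ne_zero.mpr hi0
        apply Finset.sum_eq_zero
        intro k _
        by_cases hlt : i + τ2 < T
        · have e : k * T + i + τ = (k + τ1) * T + (i + τ2) := by
            rw [← hτeq]; ring
          rw [e, hcol' k i hi1 hi, hcol' (k + τ1) (i + τ2) (by omega) hlt,
              hcol k i hi1 hi, hcol (k + τ1) (i + τ2) (by omega) hlt, sub_self]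
        · obtain ⟨m, hm⟩ : ∃ m, i + τ2 = T + m := ⟨i + τ2 - T, by omega⟩
          have hm1 : 1 ≤ m := by omega
          have hmT : m < T := by omega
          have e : k * T + i + τ = (k + τ1 + 1) * T + m := by
            calc k * T + i + τ = k * T + τ1 * T + (i + τ2) := by rw [← hτeq]; ring
              _ = k * T + τ1 * T + (T + m) := by rw [hm]
              _ = (k + τ1 + 1) * T + m := by ring
          rw [e, hcol' k i hi1 hi, hcol' (k + τ1 + 1) m hm1 hmT,
              hcol k i hi1 hi, hcol (k + τ1 + 1) m hm1 hmT, sub_self]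
      rw [← Finset.sum_subset hsub hzero]
      have hne : (0 : ℕ) ≠ T - τ2 := by omega
      rw [Finset.sum_pair hne]
      have hG0 : (∑ k ∈ Finset.range K,
            ((-1:ℤ) ^ ((s' (k * T + 0) + s' (k * T + 0 + τ)).val)
              - (-1:ℤ) ^ ((s (k * T + 0) + s (k * T + 0 + τ)).val)))
          = 2 * bal K (a τ2) := by
        have step : ∀ k, ((-1:ℤ) ^ ((s' (k * T + 0) + s' (k * T + 0 + τ)).val)
              - (-1:ℤ) ^ ((s (k * T + 0) + s (k * T + 0 + τ)).val))
            = -2 * (-1:ℤ) ^ ((a τ2 (k + τ1)).val) := by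
          intro k
          have e : k * T + 0 + τ = (k + τ1) * T + τ2 := by rw [← hτeq]; ring
          rw [e, show k * T + 0 = k * T from rfl, hs0 k, hs'0 k,
              hcol (k + τ1) τ2 hτ2pos hτ2T, hcol' (k + τ1) τ2 hτ2pos hτ2T,
              zero_add, neg_one_pow_one_add]
          ring
        rw [Finset.sum_congr rfl (fun k _ => step k), ← Finset.mul_sum,
            sum_shift (fun n => (-1:ℤ) ^ ((a τ2 n).val)) (fun n => by simp [ha τ2 n]) τ1,
            sum_neg_one_pow]
        ring
      have hG1 : (∑ k ∈ Finset.range K,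
            ((-1:ℤ) ^ ((s' (k * T + (T - τ2)) + s' (k * T + (T - τ2) + τ)).val)
              - (-1:ℤ) ^ ((s (k * T + (T - τ2)) + s (k * T + (T - τ2) + τ)).val)))
          = 2 * bal K (a (T - τ2)) := by
        have step : ∀ k, ((-1:ℤ) ^ ((s' (k * T + (T - τ2)) + s' (k * T + (T - τ2) + τ)).val)
              - (-1:ℤ) ^ ((s (k * T + (T - τ2)) + s (k * T + (T - τ2) + τ)).val))
            = -2 * (-1:ℤ) ^ ((a (T - τ2) k).val) := by
          intro k
          obtain ⟨m, hm⟩ : ∃ m, T = τ2 + m := ⟨T - τ2, by omega⟩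
          have hmm : T - τ2 = m := by omega
          have e : k * T + (T - τ2) + τ = (k + τ1 + 1) * T := by
            calc k * T + (T - τ2) + τ = k * T + m + (τ1 * T + τ2) := by
                  rw [hτeq, hmm]
              _ = k * T + τ1 * T + (τ2 + m) := by ring
              _ = k * T + τ1 * T + T := by rw [← hm]
              _ = (k + τ1 + 1) * T := by ring
          rw [e, hs0 (k + τ1 + 1), hs'0 (k + τ1 + 1),
              hcol k (T - τ2) (by omega) (by omega),
              hcol' k (T - τ2) (by omega) (by omega),
              add_zero, add_comm (a (T - τ2) k) 1, neg_one_pow_one_add]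
          ring
        rw [Finset.sum_congr rfl (fun k _ => step k), ← Finset.mul_sum,
            sum_neg_one_pow]
        ring
      rw [hG0, hG1]
      have := hbal τ2 hτ2pos hτ2T
      linarith
  constructor
  · intro h τ h1 h2; rw [← key τ]; exact h τ h1 h2
  · intro h τ h1 h2; rw [key τ]; exact h τ h1 h2
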